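/- Define indices o₀ = 0 and, recursively for v ≥ 1 while o_{v−1} < K+1: let p_v = min over i with o_{v−1} < i ≤ K+1 of ( Σ_{j=o_{v−1}}^{i−1} Eʲ ) / ( tⁱ − t^{o_{v−1}} ), and let o_v be the largest index i attaining this minimum. Define the power sequence P by Pⁱ = p_v for all i with o_{v−1} < i ≤ o_v. Then P is feasible, and P maximizes the throughput Σ_{i=1}^{K+1} lⁱ g(Pⁱ) over all feasible power sequences; that is, the greedy minimal-slope policy is optimal for the single-sequence energy-harvesting problem. -/

import Mathlib

/-- `g(x) = (1/2) log(1 + K₀ x)` (natural logarithm). -/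
noncomputable def gfun (K0 x : ℝ) : ℝ := Real.log (1 + K0 * x) / 2

/-- Feasibility in the single-sequence energy-harvesting problem. -/
def SFeas (K : ℕ) (t E P : ℕ → ℝ) : Prop :=
  (∀ i, 1 ≤ i → i ≤ K + 1 → 0 ≤ P i) ∧
  (∀ k, 1 ≤ k → k ≤ K + 1 →
    ∑ i ∈ Finset.Icc 1 k, P i * (t i - t (i - 1)) ≤ ∑ j ∈ Finset.range k, E j)

/-- The throughput `Σ_{i=1}^{K+1} lⁱ g(Pⁱ)`. -/
noncomputable def SThroughput (K0 : ℝ) (K : ℕ) (t P : ℕ → ℝ) : ℝ :=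
  ∑ i ∈ Finset.Icc 1 (K + 1), (t i - t (i - 1)) * gfun K0 (P i)

/-- Concavity tangent-line bound for `gfun`. -/
lemma gfun_concave_bound (K0 a b : ℝ) (hK0 : 0 < K0) (ha : 0 ≤ a) (hb : 0 ≤ b) :
    gfun K0 b - gfun K0 a ≤ K0 / (2 * (1 + K0 * a)) * (b - a) := by
  have hx : (0:ℝ) < 1 + K0 * a := by nlinarith
  have hy : (0:ℝ) < 1 + K0 * b := by nlinarith
  have h1 : Real.log ((1 + K0*b)/(1 + K0*a)) ≤ (1 + K0*b)/(1 + K0*a) - 1 :=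
    Real.log_le_sub_one_of_pos (by positivity)
  rw [Real.log_div hy.ne' hx.ne'] at h1
  have h2 : ((1 + K0*b)/(1 + K0*a) - 1)/2 = K0 / (2*(1+K0*a)) * (b - a) := by
    field_simp; ring
  unfold gfun
  linarith

/-- Abel summation. -/
lemma myabel (f D : ℕ → ℝ) (hD0 : D 0 = 0) :
    ∀ N, ∑ i ∈ Finset.Icc 1 N, f i * (D i - D (i - 1)) =
      ∑ k ∈ Finset.Icc 1 N, (f k - f (k + 1)) * D k + f (N + 1) * D N := by
  intro N
  induction N with
  | zero => simp [hD0]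
  | succ n ih =>
    rw [Finset.sum_Icc_succ_top (by omega), Finset.sum_Icc_succ_top (by omega), ih]
    simp only [Nat.add_sub_cancel]
    ring

/-- Telescoping sum of epoch lengths. -/
lemma mytele (t : ℕ → ℝ) (a : ℕ) : ∀ k, a ≤ k →
    ∑ i ∈ Finset.Ioc a k, (t i - t (i - 1)) = t k - t a := by
  intro k hk
  induction k, hk using Nat.le_induction with
  | base => simp
  | succ n hn ih =>
    have h1 : Finset.Ioc a (n + 1) = insert (n+1) (Finset.Ioc a n) := by
      ext y; simp [Finset.mem_Ioc, Finset.mem_insert]; omega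
    rw [h1, Finset.sum_insert (by simp), ih]
    simp only [Nat.add_sub_cancel]
    ring

/-- Optimality of the greedy minimal-slope policy (equations (39)–(40) of the
paper): with `o₀ = 0` and, recursively while `o_{v-1} < K+1`,
`p_v = min_{o_{v-1} < i ≤ K+1} (Σ_{j=o_{v-1}}^{i-1} Eʲ)/(tⁱ − t^{o_{v-1}})`,
`o_v` the largest index attaining this minimum, and `Pⁱ = p_v` for
`o_{v-1} < i ≤ o_v`, the resulting power sequence `P` is feasible and
maximizes the throughput over all feasible power sequences. -/
theorem greedy_minimal_slope_optimal (K0 : ℝ) (hK0 : 0 < K0)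
    (K : ℕ) (t : ℕ → ℝ) (ht0 : t 0 = 0) (htmono : ∀ i, i ≤ K → t i < t (i + 1))
    (E : ℕ → ℝ) (hE0 : 0 < E 0) (hE : ∀ j, 1 ≤ j → j ≤ K → 0 ≤ E j)
    (o : ℕ → ℕ) (p : ℕ → ℝ) (P : ℕ → ℝ)
    (ho0 : o 0 = 0)
    (hp : ∀ v, 1 ≤ v → ∀ h : o (v - 1) < K + 1,
      p v = (Finset.Ioc (o (v - 1)) (K + 1)).inf' (Finset.nonempty_Ioc.mpr h)
        (fun i => (∑ j ∈ Finset.Ico (o (v - 1)) i, E j) / (t i - t (o (v - 1)))))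
    (ho : ∀ v, 1 ≤ v → o (v - 1) < K + 1 →
      (o (v - 1) < o v ∧ o v ≤ K + 1) ∧
      (∑ j ∈ Finset.Ico (o (v - 1)) (o v), E j) / (t (o v) - t (o (v - 1))) = p v ∧
      (∀ i, o (v - 1) < i → i ≤ K + 1 →
        (∑ j ∈ Finset.Ico (o (v - 1)) i, E j) / (t i - t (o (v - 1))) = p v →
        i ≤ o v))
    (hP : ∀ v, 1 ≤ v → o (v - 1) < K + 1 →
      ∀ i, o (v - 1) < i → i ≤ o v → P i = p v) :
    SFeas K t E P ∧
    ∀ Q : ℕ → ℝ, SFeas K t E Q → SThroughput K0 K t Q ≤ SThroughput K0 K t P := by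
  -- strict monotonicity of t on [0, K+1]
  have htm : ∀ a b : ℕ, a < b → b ≤ K + 1 → t a < t b := by
    intro a b hab hb
    induction b with
    | zero => omega
    | succ n ih =>
      rcases Nat.lt_succ_iff_lt_or_eq.mp hab with h | h
      · exact lt_trans (ih h (by omega)) (htmono n (by omega))
      · subst h; exact htmono a (by omega)
  have hEnn : ∀ j, j ≤ K → 0 ≤ E j := by
    intro j hj
    rcases Nat.eq_zero_or_pos j with h | h
    · subst h; exact hE0.le
    · exact hE j h hj
  have hEsum : ∀ a b : ℕ, b ≤ K + 1 → 0 ≤ ∑ j ∈ Finset.Ico a b, E j := by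
    intro a b hb
    exact Finset.sum_nonneg fun j hj => hEnn j (by simp [Finset.mem_Ico] at hj; omega)
  -- the terminal index V with o V = K+1
  have exV : ∃ v, K + 1 ≤ o v := by
    by_contra hc
    push_neg at hc
    have mono : ∀ v, v ≤ o v := by
      intro v
      induction v with
      | zero => omega
      | succ n ih =>
        have h := (ho (n+1) (by omega) (by simpa using hc n)).1.1
        simp only [Nat.add_sub_cancel] at h
        omega
    have := mono (K+1); have := hc (K+1); omega
  have hVex : ∃ V, 1 ≤ V ∧ (∀ v, v < V → o v < K + 1) ∧ o V = K + 1 := by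
    have hpre : ∀ v, v < Nat.find exV → o v < K + 1 := by
      intro v hv
      have := Nat.find_min exV hv
      omega
    have hVpos : 1 ≤ Nat.find exV := by
      by_contra hc
      have h1 := Nat.find_spec exV
      have h0 : Nat.find exV = 0 := by omega
      rw [h0, ho0] at h1
      omega
    have hoV : o (Nat.find exV) = K + 1 := by
      have h1 := Nat.find_spec exV
      have h2 := (ho (Nat.find exV) hVpos (hpre _ (by omega))).1.2
      omega
    exact ⟨Nat.find exV, hVpos, hpre, hoV⟩
  obtain ⟨V, hVpos, hpre, hoV⟩ := hVex
  -- segment basics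
  have hseg' : ∀ v, 1 ≤ v → v ≤ V → o (v-1) < o v ∧ o v ≤ K + 1 := by
    intro v h1 h2
    exact (ho v h1 (hpre (v-1) (by omega))).1
  have omono : ∀ u v : ℕ, u ≤ v → v ≤ V → o u ≤ o v := by
    intro u v huv hvV
    induction v with
    | zero =>
      have hu : u = 0 := by omega
      simp [hu]
    | succ n ih =>
      rcases Nat.le_succ_iff.mp huv with h | h
      · have h1 : o n ≤ o (n+1) := by
          have := (hseg' (n+1) (by omega) hvV).1
          simp only [Nat.add_sub_cancel] at this
          omega
        exact le_trans (ih h (by omega)) h1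
      · rw [h]
  -- segment membership
  have hseg : ∀ i, 1 ≤ i → i ≤ K + 1 → ∃ v, 1 ≤ v ∧ v ≤ V ∧ o (v - 1) < i ∧ i ≤ o v := by
    intro i hi1 hi2
    have hex : ∃ v, i ≤ o v := ⟨V, by omega⟩
    have hw1 : 1 ≤ Nat.find hex := by
      by_contra hc
      have hspec := Nat.find_spec hex
      have h0 : Nat.find hex = 0 := by omega
      rw [h0, ho0] at hspec
      omega
    refine ⟨Nat.find hex, hw1, ?_, ?_, Nat.find_spec hex⟩
    · exact Nat.find_min' hex (by omega)
    · have hmin := Nat.find_min hex (show Nat.find hex - 1 < Nat.find hex by omega)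
      omega
  have htpos : ∀ v, 1 ≤ v → v ≤ V → 0 < t (o v) - t (o (v-1)) := by
    intro v h1 h2
    exact sub_pos.mpr (htm _ _ (hseg' v h1 h2).1 (hseg' v h1 h2).2)
  have hslope_eq : ∀ v, 1 ≤ v → v ≤ V →
      p v * (t (o v) - t (o (v-1))) = ∑ j ∈ Finset.Ico (o (v-1)) (o v), E j := by
    intro v h1 h2
    have h3 := (ho v h1 (hpre (v-1) (by omega))).2.1
    have hd := htpos v h1 h2
    rw [div_eq_iff hd.ne'] at h3
    linarith
  have hppos : ∀ v, 1 ≤ v → v ≤ V → 0 ≤ p v := by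
    intro v h1 h2
    have he := hslope_eq v h1 h2
    have hS := hEsum (o (v-1)) (o v) (hseg' v h1 h2).2
    nlinarith [htpos v h1 h2]
  have hslope_le : ∀ v, 1 ≤ v → v ≤ V → ∀ i, o (v-1) < i → i ≤ K + 1 →
      p v * (t i - t (o (v-1))) ≤ ∑ j ∈ Finset.Ico (o (v-1)) i, E j := by
    intro v h1 h2 i hi1 hi2
    have hd : 0 < t i - t (o (v-1)) := sub_pos.mpr (htm _ _ hi1 hi2)
    have hle : p v ≤ (∑ j ∈ Finset.Ico (o (v-1)) i, E j) / (t i - t (o (v-1))) := by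
      rw [hp v h1 (hpre (v-1) (by omega))]
      exact Finset.inf'_le _ (Finset.mem_Ioc.mpr ⟨hi1, hi2⟩)
    exact (le_div_iff₀ hd).mp hle
  -- p is nondecreasing
  have pstep : ∀ v, 1 ≤ v → v + 1 ≤ V → p v ≤ p (v + 1) := by
    intro v h1 h2
    have hov : o v < K + 1 := hpre v (by omega)
    have hov' : o ((v+1) - 1) < K + 1 := by simpa using hov
    have hne := Finset.nonempty_Ioc.mpr hov'
    obtain ⟨i, hi, hieq⟩ := Finset.exists_mem_eq_inf' hne
      (fun i => (∑ j ∈ Finset.Ico (o ((v+1) - 1)) i, E j) / (t i - t (o ((v+1) - 1))))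
    simp only [Nat.add_sub_cancel] at hi hieq
    rw [Finset.mem_Ioc] at hi
    have hd1 : 0 < t i - t (o v) := sub_pos.mpr (htm _ _ hi.1 hi.2)
    have e1 : p (v+1) * (t i - t (o v)) = ∑ j ∈ Finset.Ico (o v) i, E j := by
      have := hp (v+1) (by omega) hov'
      simp only [Nat.add_sub_cancel] at this
      rw [this, hieq, div_mul_cancel₀ _ hd1.ne']
    have e2 := hslope_eq v h1 (by omega)
    have e3 := hslope_le v h1 (by omega) i (lt_trans (hseg' v h1 (by omega)).1 hi.1) hi.2
    have esplit : (∑ j ∈ Finset.Ico (o (v-1)) (o v), E j) + ∑ j ∈ Finset.Ico (o v) i, E j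
        = ∑ j ∈ Finset.Ico (o (v-1)) i, E j :=
      Finset.sum_Ico_consecutive E (hseg' v h1 (by omega)).1.le hi.1.le
    nlinarith [hd1]
  have pchain : ∀ u v : ℕ, 1 ≤ u → u ≤ v → v ≤ V → p u ≤ p v := by
    intro u v h1 huv hvV
    induction v with
    | zero => omega
    | succ n ih =>
      rcases Nat.le_succ_iff.mp huv with h | h
      · have hn1 : 1 ≤ n := le_trans h1 h
        exact le_trans (ih h (by omega)) (pstep n hn1 hvV)
      · rw [h]
  -- P values
  have hPval : ∀ v, 1 ≤ v → v ≤ V → ∀ i, o (v-1) < i → i ≤ o v → P i = p v := by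
    intro v h1 h2 i hi1 hi2
    exact hP v h1 (hpre (v-1) (by omega)) i hi1 hi2
  have hPnn : ∀ i, 1 ≤ i → i ≤ K + 1 → 0 ≤ P i := by
    intro i h1 h2
    obtain ⟨v, hv1, hv2, hv3, hv4⟩ := hseg i h1 h2
    rw [hPval v hv1 hv2 i hv3 hv4]
    exact hppos v hv1 hv2
  -- sum manipulation helpers
  have hIcc : ∀ x : ℕ, Finset.Icc 1 x = Finset.Ioc 0 x := by
    intro x; ext y; simp [Finset.mem_Icc, Finset.mem_Ioc]; omega
  have hsplit : ∀ (h : ℕ → ℝ) (m k : ℕ), m ≤ k →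
      ∑ i ∈ Finset.Icc 1 k, h i = ∑ i ∈ Finset.Icc 1 m, h i + ∑ i ∈ Finset.Ioc m k, h i := by
    intro h m k hmk
    rw [hIcc, hIcc, Finset.sum_Ioc_consecutive h (Nat.zero_le m) hmk]
  have hbandsum : ∀ v, 1 ≤ v → v ≤ V → ∀ k, o (v-1) ≤ k → k ≤ o v →
      ∑ i ∈ Finset.Ioc (o (v-1)) k, P i * (t i - t (i-1)) = p v * (t k - t (o (v-1))) := by
    intro v h1 h2 k hk1 hk2
    have hcong : ∑ i ∈ Finset.Ioc (o (v-1)) k, P i * (t i - t (i-1))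
        = ∑ i ∈ Finset.Ioc (o (v-1)) k, p v * (t i - t (i-1)) := by
      refine Finset.sum_congr rfl fun i hi => ?_
      rw [Finset.mem_Ioc] at hi
      rw [hPval v h1 h2 i hi.1 (le_trans hi.2 hk2)]
    rw [hcong, ← Finset.mul_sum, mytele t _ k hk1]
  -- tightness at breakpoints
  have tight : ∀ v, v ≤ V →
      ∑ i ∈ Finset.Icc 1 (o v), P i * (t i - t (i - 1)) = ∑ j ∈ Finset.range (o v), E j := by
    intro v
    induction v with
    | zero => intro _; simp [ho0]
    | succ n ih =>
      intro h
      have hn : n ≤ V := by omega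
      have h1n : o n < o (n+1) := by
        have := (hseg' (n+1) (by omega) h).1
        simpa using this
      have hb := hbandsum (n+1) (by omega) h (o (n+1)) (by simpa using h1n.le) (by simp)
      simp only [Nat.add_sub_cancel] at hb
      have he := hslope_eq (n+1) (by omega) h
      simp only [Nat.add_sub_cancel] at he
      rw [hsplit _ (o n) (o (n+1)) h1n.le, ih hn, hb, he]
      rw [Finset.range_eq_Ico, Finset.range_eq_Ico]
      exact Finset.sum_Ico_consecutive E (Nat.zero_le _) h1n.le
  -- feasibility
  have feas : SFeas K t E P := by
    constructor
    · exact hPnn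
    · intro k hk1 hk2
      obtain ⟨v, hv1, hv2, hv3, hv4⟩ := hseg k hk1 hk2
      rw [hsplit _ (o (v-1)) k hv3.le, tight (v-1) (by omega),
        hbandsum v hv1 hv2 k hv3.le hv4]
      have h1 := hslope_le v hv1 hv2 k hv3 hk2
      have h2 : (∑ j ∈ Finset.range (o (v-1)), E j) + ∑ j ∈ Finset.Ico (o (v-1)) k, E j
          = ∑ j ∈ Finset.range k, E j := by
        rw [Finset.range_eq_Ico, Finset.range_eq_Ico]
        exact Finset.sum_Ico_consecutive E (Nat.zero_le _) hv3.le
      linarith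
  refine ⟨feas, ?_⟩
  intro Q hQ
  obtain ⟨hQnn, hQc⟩ := hQ
  set F : ℕ → ℝ := fun k => if k ≤ K + 1 then K0 / (2 * (1 + K0 * P k)) else 0 with hF
  set D : ℕ → ℝ := fun k => ∑ i ∈ Finset.Icc 1 k, (Q i - P i) * (t i - t (i - 1)) with hD
  have hFval : ∀ k, k ≤ K + 1 → F k = K0 / (2 * (1 + K0 * P k)) := by
    intro k hk
    rw [hF]
    simp [hk]
  have hD0 : D 0 = 0 := by simp [hD]
  have hDsub : ∀ k, D k = (∑ i ∈ Finset.Icc 1 k, Q i * (t i - t (i-1)))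
      - ∑ i ∈ Finset.Icc 1 k, P i * (t i - t (i-1)) := by
    intro k
    simp only [hD]
    rw [← Finset.sum_sub_distrib]
    exact Finset.sum_congr rfl fun i _ => by ring
  have hDle : ∀ v, v ≤ V → 1 ≤ o v → D (o v) ≤ 0 := by
    intro v hv h1
    have h2 : o v ≤ K + 1 := by
      rcases Nat.eq_zero_or_pos v with h | h
      · subst h; rw [ho0]; omega
      · exact (hseg' v h hv).2
    have := hQc (o v) h1 h2
    have := tight v hv
    rw [hDsub]
    linarith
  have hDstep : ∀ i, 1 ≤ i → D i - D (i-1) = (Q i - P i) * (t i - t (i-1)) := by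
    intro i h1
    have hsingle : Finset.Ioc (i-1) i = {i} := by
      ext y; simp [Finset.mem_Ioc]; omega
    have : D i = D (i - 1) + (Q i - P i) * (t i - t (i-1)) := by
      simp only [hD]
      rw [hsplit _ (i-1) i (by omega), hsingle, Finset.sum_singleton]
    linarith
  have key : SThroughput K0 K t Q - SThroughput K0 K t P ≤
      ∑ i ∈ Finset.Icc 1 (K+1), F i * (D i - D (i-1)) := by
    rw [SThroughput, SThroughput, ← Finset.sum_sub_distrib]
    apply Finset.sum_le_sum
    intro i hi
    rw [Finset.mem_Icc] at hi
    have hl : 0 < t i - t (i-1) := sub_pos.mpr (htm (i-1) i (by omega) hi.2)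
    rw [hDstep i hi.1]
    have hFi : F i = K0 / (2 * (1 + K0 * P i)) := hFval i hi.2
    rw [hFi]
    have hcon := gfun_concave_bound K0 (P i) (Q i) hK0 (hPnn i hi.1 hi.2) (hQnn i hi.1 hi.2)
    nlinarith [mul_le_mul_of_nonneg_left hcon hl.le]
  have hFtop : F (K+1+1) = 0 := by rw [hF]; simp
  have hterm : ∀ k ∈ Finset.Icc 1 (K+1), (F k - F (k+1)) * D k ≤ 0 := by
    intro k hk
    rw [Finset.mem_Icc] at hk
    have hFknn : (0:ℝ) ≤ F k := by
      rw [hFval k hk.2]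
      have := hPnn k hk.1 hk.2
      apply div_nonneg hK0.le
      nlinarith
    by_cases hkN : k = K + 1
    · subst hkN
      rw [hFtop, sub_zero]
      have hD1 : D (o V) ≤ 0 := hDle V le_rfl (by omega)
      rw [hoV] at hD1
      exact mul_nonpos_of_nonneg_of_nonpos hFknn hD1
    · have hkK : k ≤ K := by omega
      obtain ⟨v, hv1, hv2, hv3, hv4⟩ := hseg k hk.1 hk.2
      by_cases hko : k = o v
      · have hDk : D k ≤ 0 := by rw [hko]; exact hDle v hv2 (by omega)
        have hPm : P k ≤ P (k+1) := by
          obtain ⟨w, hw1, hw2, hw3, hw4⟩ := hseg (k+1) (by omega) (by omega)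
          have hvw : v ≤ w := by
            by_contra hc
            push_neg at hc
            have : o w ≤ o (v-1) := omono w (v-1) (by omega) (by omega)
            omega
          rw [hPval v hv1 hv2 k hv3 hv4, hPval w hw1 hw2 (k+1) hw3 hw4]
          exact pchain v w hv1 hvw hw2
        have hfle : F (k+1) ≤ F k := by
          rw [hFval k hk.2, hFval (k+1) (by omega)]
          have h1 : 0 < 1 + K0 * P k := by nlinarith [hPnn k hk.1 hk.2]
          have h2 : 0 < 1 + K0 * P (k+1) := by nlinarith [hPnn (k+1) (by omega) (by omega)]
          apply div_le_div_of_nonneg_left hK0.le (by linarith) ?_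
          nlinarith
        exact mul_nonpos_of_nonneg_of_nonpos (by linarith) hDk
      · have hk4 : k < o v := lt_of_le_of_ne hv4 hko
        have hpk : P k = P (k+1) := by
          rw [hPval v hv1 hv2 k hv3 hv4, hPval v hv1 hv2 (k+1) (by omega) (by omega)]
        have hFeq : F k = F (k+1) := by
          rw [hFval k hk.2, hFval (k+1) (by omega), hpk]
        rw [hFeq, sub_self, zero_mul]
  have hsum : ∑ i ∈ Finset.Icc 1 (K+1), F i * (D i - D (i-1)) ≤ 0 := by
    rw [myabel F D hD0 (K+1), hFtop, zero_mul, add_zero]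
    exact Finset.sum_nonpos hterm
  linarith
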